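/- Preconditioner lower bound step: let Σ̂ ⪰ (1−ψ)·I be a symmetric PSD matrix, Z = Σ̂ + N with ‖N‖₂ ≤ κφ, V the span of eigenvectors of Z with eigenvalue ≥ κ/2, and A = (1/√K)·Π_V + Π_{V^⊥}. Let Γ = max{ 2K/((1/2 − φ)κ), 16Kφ²/(1/2 − φ)² } and assume φ < 1/2. Then A Σ̂ A ⪰ (1−ψ)(1−Γ)·I. -/

import Mathlib

open scoped InnerProductSpace RealInnerProductSpace

noncomputable section

/-- The span of the eigenvectors of the symmetric operator `Z` on `ℝ^d` with
eigenvalue at least `κ/2`. -/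
def bigEigSpace {d : ℕ} (Z : EuclideanSpace ℝ (Fin d) →L[ℝ] EuclideanSpace ℝ (Fin d))
    (κ : ℝ) : Submodule ℝ (EuclideanSpace ℝ (Fin d)) :=
  ⨆ (μ : ℝ) (_ : κ / 2 ≤ μ), Module.End.eigenspace (Z : EuclideanSpace ℝ (Fin d) →ₗ[ℝ] EuclideanSpace ℝ (Fin d)) μ

/-- The orthogonal projection onto a subspace, as an operator on the ambient space. -/
def projCLM {d : ℕ} (V : Submodule ℝ (EuclideanSpace ℝ (Fin d))) :
    EuclideanSpace ℝ (Fin d) →L[ℝ] EuclideanSpace ℝ (Fin d) :=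
  V.subtypeL.comp (V.orthogonalProjectionOnto)

private lemma combo_ineq (W L1 L2 T D μ : ℝ) (hD : 0 < D) (hμ0 : 0 ≤ μ) (hμD : μ ≤ D)
    (h1 : L1 ≤ W) (h2 : L2 ≤ W) (hT : D * T ≤ (D - μ) * L1 + μ * L2) : T ≤ W := by
  have h3 : (D - μ) * L1 + μ * L2 ≤ (D - μ) * W + μ * W :=
    add_le_add (mul_le_mul_of_nonneg_left h1 (sub_nonneg.mpr hμD))
      (mul_le_mul_of_nonneg_left h2 hμ0)
  have h4 : (D - μ) * W + μ * W = D * W := by ring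
  exact le_of_mul_le_mul_left (by linarith) hD

set_option maxHeartbeats 1600000 in
lemma key_poly (s g sk D kp a b qv qw r : ℝ)
    (hs0 : 0 ≤ s) (hs1 : s ≤ 1) (hsk : 0 < sk) (hD : 0 < D) (hkp0 : 0 ≤ kp)
    (hg0 : 0 ≤ g)
    (hg : 2 * sk ^ 2 ≤ g ^ 2 * D)
    (hkp : 4 * kp * sk ≤ g * D)
    (ha : 0 ≤ a) (hb : 0 ≤ b)
    (hqv : D * a ^ 2 ≤ qv) (hqw : s * b ^ 2 ≤ qw)
    (hr : -(kp * (a * b)) ≤ r)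
    (hE : s * (a ^ 2 + sk ^ 2 * b ^ 2) ≤ qv + 2 * sk * r + sk ^ 2 * qw) :
    s * (1 - g ^ 2) * sk ^ 2 * (a ^ 2 + b ^ 2) ≤ qv + 2 * sk * r + sk ^ 2 * qw := by
  have hL1 : 0 ≤ s * (a ^ 2 + sk ^ 2 * b ^ 2) := by positivity
  have hW0 : 0 ≤ qv + 2 * sk * r + sk ^ 2 * qw := le_trans hL1 hE
  by_cases hgbig : 1 ≤ g ^ 2
  · have h2 : 0 ≤ s * sk ^ 2 * (a ^ 2 + b ^ 2) := by positivity
    nlinarith [h2]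
  push_neg at hgbig
  have h1g : 0 ≤ 1 - g ^ 2 := by linarith
  by_cases hab : g * b ≤ a
  · -- main case: convex combination
    have hcr : -(g * D / 2 * (a * b)) ≤ 2 * sk * r := by
      have h1 : 2 * sk * (-(kp * (a * b))) ≤ 2 * sk * r :=
        mul_le_mul_of_nonneg_left hr (by positivity)
      nlinarith [mul_le_mul_of_nonneg_right hkp (mul_nonneg ha hb)]
    have hcross : g * D / 2 * (a * b) ≤ D / 2 * a ^ 2 := by
      nlinarith [mul_le_mul_of_nonneg_right (mul_le_mul_of_nonneg_right hab ha) hD.le]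
    have hW2 : D / 2 * a ^ 2 + sk ^ 2 * (s * b ^ 2) ≤ qv + 2 * sk * r + sk ^ 2 * qw := by
      have h3 : sk ^ 2 * (s * b ^ 2) ≤ sk ^ 2 * qw :=
        mul_le_mul_of_nonneg_left hqw (by positivity)
      linarith
    have hμ0 : 0 ≤ 2 * s * (1 - g ^ 2) * sk ^ 2 := by positivity
    have e0 : 0 ≤ s * (1 - g ^ 2) := mul_nonneg hs0 h1g
    have e1 : s * (1 - g ^ 2) ≤ 1 := by nlinarith
    have hμD : 2 * s * (1 - g ^ 2) * sk ^ 2 ≤ D := by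
      have hA : s * (1 - g ^ 2) * (2 * sk ^ 2) ≤ s * (1 - g ^ 2) * (g ^ 2 * D) :=
        mul_le_mul_of_nonneg_left hg e0
      have hC : s * (1 - g ^ 2) * g ^ 2 * D ≤ 1 * D := by
        have : s * (1 - g ^ 2) * g ^ 2 ≤ 1 := by
          nlinarith [mul_le_mul_of_nonneg_right e1 (sq_nonneg g)]
        exact mul_le_mul_of_nonneg_right this hD.le
      linarith [hA, hC]
    refine combo_ineq _ (s * (a ^ 2 + sk ^ 2 * b ^ 2)) (D / 2 * a ^ 2 + sk ^ 2 * (s * b ^ 2)) _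
      D (2 * s * (1 - g ^ 2) * sk ^ 2) hD hμ0 hμD hE hW2 ?_
    have e2 : (D - 2 * s * (1 - g ^ 2) * sk ^ 2) * (s * (a ^ 2 + sk ^ 2 * b ^ 2))
          + 2 * s * (1 - g ^ 2) * sk ^ 2 * (D / 2 * a ^ 2 + sk ^ 2 * (s * b ^ 2))
          - D * (s * (1 - g ^ 2) * sk ^ 2 * (a ^ 2 + b ^ 2))
          = (D - 2 * s * (1 - g ^ 2) * sk ^ 2) * s * a ^ 2
            + s * sk ^ 2 * D * g ^ 2 * b ^ 2 := by ring
    have t1 : 0 ≤ (D - 2 * s * (1 - g ^ 2) * sk ^ 2) * s * a ^ 2 :=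
      mul_nonneg (mul_nonneg (sub_nonneg.mpr hμD) hs0) (sq_nonneg a)
    have t2 : 0 ≤ s * sk ^ 2 * D * g ^ 2 * b ^ 2 := by positivity
    linarith [e2, t1, t2]
  · push_neg at hab
    have ha2 : a ^ 2 ≤ g ^ 2 * b ^ 2 := by nlinarith
    have h4 : s * (1 - g ^ 2) * sk ^ 2 * (a ^ 2 + b ^ 2) ≤ s * (sk ^ 2 * b ^ 2) := by
      nlinarith [mul_nonneg (mul_nonneg hs0 (sq_nonneg sk)) (sub_nonneg.mpr ha2),
        mul_nonneg (mul_nonneg (mul_nonneg hs0 (sq_nonneg g)) (sq_nonneg sk)) (sq_nonneg a)]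
    have h5 : s * (sk ^ 2 * b ^ 2) ≤ s * (a ^ 2 + sk ^ 2 * b ^ 2) := by
      nlinarith [mul_nonneg hs0 (sq_nonneg a)]
    linarith

set_option maxHeartbeats 1600000 in
lemma key_scalar (s Γ K D kp a b qv qw r : ℝ)
    (hs0 : 0 ≤ s) (hs1 : s ≤ 1) (hK : 0 < K) (hD : 0 < D) (hkp0 : 0 ≤ kp)
    (hΓ1 : 2 * K / D ≤ Γ)
    (hkp : 4 * kp * Real.sqrt K ≤ Real.sqrt Γ * D)
    (ha : 0 ≤ a) (hb : 0 ≤ b)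
    (hqv : D * a ^ 2 ≤ qv) (hqw : s * b ^ 2 ≤ qw)
    (hr : -(kp * (a * b)) ≤ r)
    (hE : s * (a ^ 2 / K + b ^ 2) ≤ qv / K + 2 * (Real.sqrt K)⁻¹ * r + qw) :
    s * (1 - Γ) * (a ^ 2 + b ^ 2) ≤ qv / K + 2 * (Real.sqrt K)⁻¹ * r + qw := by
  have hΓ0 : 0 < Γ := lt_of_lt_of_le (by positivity) hΓ1
  have hsK : 0 < Real.sqrt K := Real.sqrt_pos.mpr hK
  have hsKsq : Real.sqrt K ^ 2 = K := Real.sq_sqrt hK.le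
  have hsGsq : Real.sqrt Γ ^ 2 = Γ := Real.sq_sqrt hΓ0.le
  have h6 : K * (Real.sqrt K)⁻¹ = Real.sqrt K := by
    rw [mul_inv_eq_iff_eq_mul₀ hsK.ne']
    exact (Real.mul_self_sqrt hK.le).symm
  have hqvK : K * (qv / K) = qv := by field_simp
  have haK : K * (a ^ 2 / K) = a ^ 2 := by field_simp
  have hg : 2 * Real.sqrt K ^ 2 ≤ Real.sqrt Γ ^ 2 * D := by
    rw [hsKsq, hsGsq]
    rw [div_le_iff₀ hD] at hΓ1
    linarith
  have hE' : s * (a ^ 2 + Real.sqrt K ^ 2 * b ^ 2) ≤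
      qv + 2 * Real.sqrt K * r + Real.sqrt K ^ 2 * qw := by
    have h1 := mul_le_mul_of_nonneg_left hE hK.le
    have h2 : K * (s * (a ^ 2 / K + b ^ 2)) = s * (a ^ 2 + K * b ^ 2) := by
      linear_combination s * haK
    have h3 : K * (qv / K + 2 * (Real.sqrt K)⁻¹ * r + qw) =
        qv + 2 * Real.sqrt K * r + K * qw := by
      linear_combination hqvK + 2 * r * h6
    rw [h2, h3] at h1
    rw [hsKsq]
    linarith
  have hmain := key_poly s (Real.sqrt Γ) (Real.sqrt K) D kp a b qv qw r hs0 hs1 hsK hD hkp0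
    (Real.sqrt_nonneg Γ) hg hkp ha hb hqv hqw hr hE'
  rw [hsKsq, hsGsq] at hmain
  have h4 : s * (1 - Γ) * (a ^ 2 + b ^ 2) * K ≤
      (qv / K + 2 * (Real.sqrt K)⁻¹ * r + qw) * K := by
    have h5 : (qv / K + 2 * (Real.sqrt K)⁻¹ * r + qw) * K =
        qv + 2 * Real.sqrt K * r + K * qw := by
      linear_combination hqvK + 2 * r * h6
    rw [h5]
    nlinarith [hmain]
  exact le_of_mul_le_mul_right h4 hK

open scoped InnerProductSpace RealInnerProductSpace

noncomputable section

lemma projCLM_apply {d : ℕ} (V : Submodule ℝ (EuclideanSpace ℝ (Fin d)))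
    (x : EuclideanSpace ℝ (Fin d)) :
    projCLM V x = (V.orthogonalProjectionOnto x : EuclideanSpace ℝ (Fin d)) := rfl

lemma bigEigSpace_invariant {d : ℕ} (Z : EuclideanSpace ℝ (Fin d) →L[ℝ] EuclideanSpace ℝ (Fin d))
    (κ : ℝ) : ∀ u ∈ bigEigSpace Z κ, Z u ∈ bigEigSpace Z κ := by
  suffices h : Submodule.map (Z : EuclideanSpace ℝ (Fin d) →ₗ[ℝ] EuclideanSpace ℝ (Fin d))
      (bigEigSpace Z κ) ≤ bigEigSpace Z κ by
    intro u hu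
    exact h ⟨u, hu, rfl⟩
  rw [bigEigSpace, Submodule.map_iSup]
  refine iSup_le fun μ => ?_
  rw [Submodule.map_iSup]
  refine iSup_le fun hμ => le_trans ?_ (le_iSup₂ (f := fun μ (_ : κ / 2 ≤ μ) =>
    Module.End.eigenspace (Z : EuclideanSpace ℝ (Fin d) →ₗ[ℝ] EuclideanSpace ℝ (Fin d)) μ) μ hμ)
  rintro y ⟨x, hx, rfl⟩
  simp only [SetLike.mem_coe, Module.End.mem_eigenspace_iff] at hx
  rw [Module.End.mem_eigenspace_iff, hx, map_smul, hx]

lemma bigEigSpace_coercive {d : ℕ} {Z : EuclideanSpace ℝ (Fin d) →L[ℝ] EuclideanSpace ℝ (Fin d)}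
    (hZ : (Z : EuclideanSpace ℝ (Fin d) →ₗ[ℝ] EuclideanSpace ℝ (Fin d)).IsSymmetric)
    (κ : ℝ) {u : EuclideanSpace ℝ (Fin d)} (hu : u ∈ bigEigSpace Z κ) :
    κ / 2 * ‖u‖ ^ 2 ≤ ⟪Z u, u⟫_ℝ := by
  have hinv : ∀ v ∈ bigEigSpace Z κ,
      (Z : EuclideanSpace ℝ (Fin d) →ₗ[ℝ] EuclideanSpace ℝ (Fin d)) v ∈ bigEigSpace Z κ :=
    fun v hv => bigEigSpace_invariant Z κ v hv
  set T := (Z : EuclideanSpace ℝ (Fin d) →ₗ[ℝ] EuclideanSpace ℝ (Fin d)).restrict hinv with hTdef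
  have hT : T.IsSymmetric := hZ.restrict_invariant hinv
  set n := Module.finrank ℝ (bigEigSpace Z κ) with hn
  set b := hT.eigenvectorBasis rfl with hb
  have hev : ∀ i : Fin n, κ / 2 ≤ hT.eigenvalues rfl i := by
    intro i
    by_contra hlt
    push_neg at hlt
    have hvec := hT.hasEigenvector_eigenvectorBasis rfl i
    have hbi : T (b i) = hT.eigenvalues rfl i • b i :=
      Module.End.mem_eigenspace_iff.mp hvec.1
    have hmem : (b i : EuclideanSpace ℝ (Fin d)) ∈
        Module.End.eigenspace (Z : EuclideanSpace ℝ (Fin d) →ₗ[ℝ] EuclideanSpace ℝ (Fin d))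
          (hT.eigenvalues rfl i) := by
      rw [Module.End.mem_eigenspace_iff]
      have h1 := congrArg (fun z : bigEigSpace Z κ => (z : EuclideanSpace ℝ (Fin d))) hbi
      simpa [hTdef, LinearMap.restrict_coe_apply] using h1
    have horth : bigEigSpace Z κ ≤ (Module.End.eigenspace
        (Z : EuclideanSpace ℝ (Fin d) →ₗ[ℝ] EuclideanSpace ℝ (Fin d)) (hT.eigenvalues rfl i))ᗮ := by
      show (⨆ (μ : ℝ) (_ : κ / 2 ≤ μ), Module.End.eigenspace
          (Z : EuclideanSpace ℝ (Fin d) →ₗ[ℝ] EuclideanSpace ℝ (Fin d)) μ) ≤ _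
      refine iSup₂_le fun μ hμ => ?_
      intro y hy
      rw [Submodule.mem_orthogonal]
      intro z hz
      have hne : hT.eigenvalues rfl i ≠ μ := fun h => absurd hμ (not_le.mpr (h ▸ hlt))
      exact hZ.orthogonalFamily_eigenspaces hne ⟨z, hz⟩ ⟨y, hy⟩
    have h0 : ⟪(b i : EuclideanSpace ℝ (Fin d)), (b i : EuclideanSpace ℝ (Fin d))⟫_ℝ = 0 :=
      Submodule.inner_right_of_mem_orthogonal hmem (horth (b i).2)
    have hbz : (b i : EuclideanSpace ℝ (Fin d)) = 0 := inner_self_eq_zero.mp h0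
    exact hvec.2 (ZeroMemClass.coe_eq_zero.mp hbz)
  set uV : bigEigSpace Z κ := ⟨u, hu⟩ with huV
  have hinner : ⟪Z u, u⟫_ℝ = ⟪T uV, uV⟫_ℝ := rfl
  have hexp : ⟪T uV, uV⟫_ℝ =
      ∑ i : Fin n, hT.eigenvalues rfl i * (⟪uV, b i⟫_ℝ * ⟪b i, uV⟫_ℝ) := by
    rw [← b.sum_inner_mul_inner (T uV) uV]
    refine Finset.sum_congr rfl fun i _ => ?_
    have h1 : ⟪T uV, b i⟫_ℝ = ⟪uV, T (b i)⟫_ℝ := hT uV (b i)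
    have h2 : T (b i) = (hT.eigenvalues rfl i : ℝ) • b i := hT.apply_eigenvectorBasis rfl i
    rw [h1, h2, Submodule.coe_inner, Submodule.coe_smul, real_inner_smul_right, ← Submodule.coe_inner]
    ring
  have hnorm : ‖u‖ ^ 2 = ∑ i : Fin n, ⟪uV, b i⟫_ℝ * ⟪b i, uV⟫_ℝ := by
    rw [b.sum_inner_mul_inner uV uV, real_inner_self_eq_norm_sq]
    norm_num [huV]
  rw [hinner, hexp, hnorm, Finset.mul_sum]
  refine Finset.sum_le_sum fun i _ => ?_
  have hsq : 0 ≤ ⟪uV, b i⟫_ℝ * ⟪b i, uV⟫_ℝ := by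
    rw [real_inner_comm (b i) uV]; exact mul_self_nonneg _
  exact mul_le_mul_of_nonneg_right (hev i) hsq

set_option maxHeartbeats 1600000 in
/-- Preconditioner lower bound step: let `Σ̂ ⪰ (1−ψ)·I` be symmetric PSD,
`Z = Σ̂ + N` with `‖N‖₂ ≤ κ·φ`, `V` the span of eigenvectors of `Z` with eigenvalue
`≥ κ/2`, and `A = (1/√K)·Π_V + Π_{V^⊥}`. With
`Γ = max( 2K/((1/2 − φ)κ), 16Kφ²/(1/2 − φ)² )` and `φ < 1/2`,
we have `A Σ̂ A ⪰ (1−ψ)(1−Γ)·I`. -/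
theorem stmt_16 {d : ℕ}
    (Sig N : EuclideanSpace ℝ (Fin d) →L[ℝ] EuclideanSpace ℝ (Fin d))
    (hSigSym : (Sig : EuclideanSpace ℝ (Fin d) →ₗ[ℝ] EuclideanSpace ℝ (Fin d)).IsSymmetric)
    (hNSym : (N : EuclideanSpace ℝ (Fin d) →ₗ[ℝ] EuclideanSpace ℝ (Fin d)).IsSymmetric)
    (ψ φ κ K Γ : ℝ) (hψ0 : 0 ≤ ψ) (hψ1 : ψ ≤ 1) (hφ0 : 0 ≤ φ) (hφ : φ < 1 / 2)
    (hκ : 0 < κ) (hK : 0 < K)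
    (hSiglow : ∀ x, (1 - ψ) * ‖x‖^2 ≤ ⟪Sig x, x⟫_ℝ)
    (hN : ‖N‖ ≤ κ * φ)
    (hΓ : Γ = max (2 * K / ((1 / 2 - φ) * κ)) (16 * K * φ^2 / (1 / 2 - φ)^2))
    (A : EuclideanSpace ℝ (Fin d) →L[ℝ] EuclideanSpace ℝ (Fin d))
    (hA : A = (Real.sqrt K)⁻¹ • projCLM (bigEigSpace (Sig + N) κ) +
        projCLM (bigEigSpace (Sig + N) κ)ᗮ) :
    ∀ x, (1 - ψ) * (1 - Γ) * ‖x‖^2 ≤ ⟪(A.comp (Sig.comp A)) x, x⟫_ℝ := by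
  intro x
  have ht : 0 < 1 / 2 - φ := by linarith only [hφ]
  have hD : 0 < (1 / 2 - φ) * κ := mul_pos ht hκ
  set V := bigEigSpace (Sig + N) κ with hVdef
  set v := projCLM V x with hv
  set w := projCLM Vᗮ x with hw
  have hvmem : v ∈ V := by rw [hv, projCLM_apply]; exact (V.orthogonalProjectionOnto x).2
  have hwmem : w ∈ Vᗮ := by rw [hw, projCLM_apply]; exact (Vᗮ.orthogonalProjectionOnto x).2
  have hsum : v + w = x := by
    rw [hv, hw, projCLM_apply, projCLM_apply]
    exact V.starProjection_add_starProjection_orthogonal x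
  have hvw : ⟪v, w⟫_ℝ = 0 := Submodule.inner_right_of_mem_orthogonal hvmem hwmem
  have hZsym : ((Sig + N : EuclideanSpace ℝ (Fin d) →L[ℝ] EuclideanSpace ℝ (Fin d)) :
      EuclideanSpace ℝ (Fin d) →ₗ[ℝ] EuclideanSpace ℝ (Fin d)).IsSymmetric := by
    rw [ContinuousLinearMap.coe_add]; exact hSigSym.add hNSym
  have hZv : (Sig + N) v ∈ V := bigEigSpace_invariant _ κ v hvmem
  have hZvw : ⟪(Sig + N) v, w⟫_ℝ = 0 := Submodule.inner_right_of_mem_orthogonal hZv hwmem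
  have hSvw : ⟪Sig v, w⟫_ℝ = -⟪N v, w⟫_ℝ := by
    rw [ContinuousLinearMap.add_apply, inner_add_left] at hZvw
    linarith only [hZvw]
  have hNvw : |⟪N v, w⟫_ℝ| ≤ κ * φ * (‖v‖ * ‖w‖) := by
    calc |⟪N v, w⟫_ℝ| ≤ ‖N v‖ * ‖w‖ := abs_real_inner_le_norm _ _
      _ ≤ (‖N‖ * ‖v‖) * ‖w‖ := by gcongr; exact N.le_opNorm v
      _ ≤ (κ * φ * ‖v‖) * ‖w‖ := by gcongr
      _ = κ * φ * (‖v‖ * ‖w‖) := by ring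
  have hr : -(κ * φ * (‖v‖ * ‖w‖)) ≤ ⟪Sig v, w⟫_ℝ := by
    rw [hSvw]
    have h2 := (abs_le.mp hNvw).2
    linarith only [h2]
  have hNvv : |⟪N v, v⟫_ℝ| ≤ κ * φ * ‖v‖ ^ 2 := by
    calc |⟪N v, v⟫_ℝ| ≤ ‖N v‖ * ‖v‖ := abs_real_inner_le_norm _ _
      _ ≤ (‖N‖ * ‖v‖) * ‖v‖ := by gcongr; exact N.le_opNorm v
      _ ≤ (κ * φ * ‖v‖) * ‖v‖ := by gcongr
      _ = κ * φ * ‖v‖ ^ 2 := by ring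
  have hZvv : κ / 2 * ‖v‖ ^ 2 ≤ ⟪(Sig + N) v, v⟫_ℝ := bigEigSpace_coercive hZsym κ hvmem
  have hqv : (1 / 2 - φ) * κ * ‖v‖ ^ 2 ≤ ⟪Sig v, v⟫_ℝ := by
    rw [ContinuousLinearMap.add_apply, inner_add_left] at hZvv
    have h3 := (abs_le.mp hNvv).2
    linarith only [hZvv, h3]
  have hqw : (1 - ψ) * ‖w‖ ^ 2 ≤ ⟪Sig w, w⟫_ℝ := hSiglow w
  have hAx : A x = (Real.sqrt K)⁻¹ • v + w := by
    rw [hA]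
    simp only [ContinuousLinearMap.add_apply, ContinuousLinearMap.smul_apply]
    rfl
  have hAsym : ∀ y z, ⟪A y, z⟫_ℝ = ⟪y, A z⟫_ℝ := by
    intro y z
    rw [hA]
    simp only [ContinuousLinearMap.add_apply, ContinuousLinearMap.smul_apply,
      inner_add_left, inner_add_right, real_inner_smul_left, real_inner_smul_right,
      projCLM_apply]
    simp only [← Submodule.starProjection_apply, Submodule.inner_starProjection_left_eq_right]
  have hgoal1 : ⟪(A.comp (Sig.comp A)) x, x⟫_ℝ = ⟪Sig (A x), A x⟫_ℝ := by
    rw [ContinuousLinearMap.comp_apply, ContinuousLinearMap.comp_apply, hAsym]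
  have hsK : 0 < Real.sqrt K := Real.sqrt_pos.mpr hK
  have hKs : Real.sqrt K ^ 2 = K := Real.sq_sqrt hK.le
  have hcK : (Real.sqrt K)⁻¹ * (Real.sqrt K)⁻¹ = 1 / K := by
    rw [← mul_inv, ← Real.sqrt_mul_self hK.le]
    simp
  have hsymwv : ⟪Sig w, v⟫_ℝ = ⟪Sig v, w⟫_ℝ := by
    have h := hSigSym w v
    simp only [ContinuousLinearMap.coe_coe] at h
    rw [h, real_inner_comm]
  have hexp : ⟪Sig (A x), A x⟫_ℝ =
      ⟪Sig v, v⟫_ℝ / K + 2 * (Real.sqrt K)⁻¹ * ⟪Sig v, w⟫_ℝ + ⟪Sig w, w⟫_ℝ := by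
    rw [hAx, map_add, map_smul]
    simp only [inner_add_left, inner_add_right, real_inner_smul_left, real_inner_smul_right]
    rw [hsymwv]
    linear_combination ⟪Sig v, v⟫_ℝ * hcK
  have hnormx : ‖x‖ ^ 2 = ‖v‖ ^ 2 + ‖w‖ ^ 2 := by
    rw [← hsum, norm_add_sq_real, hvw]; ring
  have hnormAx : ‖A x‖ ^ 2 = ‖v‖ ^ 2 / K + ‖w‖ ^ 2 := by
    rw [hAx, norm_add_sq_real, real_inner_smul_left, hvw, norm_smul, mul_pow]
    rw [norm_inv, Real.norm_eq_abs, abs_of_pos hsK, ← Real.sqrt_inv, Real.sq_sqrt (by positivity)]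
    ring
  have hE : (1 - ψ) * (‖v‖ ^ 2 / K + ‖w‖ ^ 2) ≤
      ⟪Sig v, v⟫_ℝ / K + 2 * (Real.sqrt K)⁻¹ * ⟪Sig v, w⟫_ℝ + ⟪Sig w, w⟫_ℝ := by
    have h4 := hSiglow (A x)
    rw [hnormAx, hexp] at h4
    exact h4
  have hΓ0 : 0 ≤ Γ := by
    rw [hΓ]
    exact le_trans (by positivity) (le_max_left _ _)
  have hΓ1 : 2 * K / ((1 / 2 - φ) * κ) ≤ Γ := by
    rw [hΓ]; exact le_max_left _ _
  have h16 : 16 * K * φ ^ 2 ≤ Γ * (1 / 2 - φ) ^ 2 := by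
    have h5 : 16 * K * φ ^ 2 / (1 / 2 - φ) ^ 2 ≤ Γ := by
      rw [hΓ]; exact le_max_right _ _
    rw [div_le_iff₀ (by positivity)] at h5
    linarith only [h5]
  have hkp : 4 * (κ * φ) * Real.sqrt K ≤ Real.sqrt Γ * ((1 / 2 - φ) * κ) := by
    have hL0 : 0 ≤ 4 * (κ * φ) * Real.sqrt K := by positivity
    have hR0 : 0 ≤ Real.sqrt Γ * ((1 / 2 - φ) * κ) := by positivity
    have hsq : (4 * (κ * φ) * Real.sqrt K) ^ 2 ≤ (Real.sqrt Γ * ((1 / 2 - φ) * κ)) ^ 2 := by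
      have e2 : (4 * (κ * φ) * Real.sqrt K) ^ 2 = 16 * K * φ ^ 2 * κ ^ 2 := by
        rw [mul_pow, hKs]; ring
      have e3 : (Real.sqrt Γ * ((1 / 2 - φ) * κ)) ^ 2 = Γ * (1 / 2 - φ) ^ 2 * κ ^ 2 := by
        rw [mul_pow, Real.sq_sqrt hΓ0]; ring
      rw [e2, e3]
      linarith only [mul_le_mul_of_nonneg_right h16 (sq_nonneg κ)]
    have h6 := Real.sqrt_le_sqrt hsq
    rwa [Real.sqrt_sq hL0, Real.sqrt_sq hR0] at h6
  rw [hgoal1, hexp, hnormx]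
  exact key_scalar (1 - ψ) Γ K ((1 / 2 - φ) * κ) (κ * φ) ‖v‖ ‖w‖ _ _ _
    (by linarith only [hψ1]) (by linarith only [hψ0]) hK hD (by positivity) hΓ1 hkp
    (norm_nonneg v) (norm_nonneg w) hqv hqw hr hE
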